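/- Let 0 < τ_1 < τ_2 < ... < τ_{m+n}, let ρ_1, ..., ρ_{m+n} > 0 with Σ_{i=1}^{m} ρ_i = 1 and Σ_{i=m+1}^{m+n} ρ_i = 1, and let β ∈ (0,1). Define C(s) = β·Σ_{i=1}^{m} ρ_i/(τ_i·s + 1) − (1−β)·Σ_{i=m+1}^{m+n} ρ_i/(τ_i·s + 1). Then for every index i with 1 ≤ i ≤ m+n−1 and i ≠ m, there exists a real z in the open interval (−1/τ_i, −1/τ_{i+1}) such that C(z) = 0. In particular, C has m−1 real zeros interlaced with the poles of the positive-feedback block and n−1 real zeros interlaced with the poles of the negative-feedback block. -/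

import Mathlib

open Filter Topology Set

private lemma inv_zero_atBot' : Tendsto (fun x : ℝ => x⁻¹) (𝓝[<] (0:ℝ)) atBot := by
  have h1 : Tendsto (fun x : ℝ => -x) (𝓝[<] (0:ℝ)) (𝓝[>] (0:ℝ)) := by
    apply tendsto_nhdsWithin_of_tendsto_nhds_of_eventually_within
    · simpa using (continuous_neg.tendsto (0:ℝ)).mono_left nhdsWithin_le_nhds
    · filter_upwards [self_mem_nhdsWithin] with x hx
      simpa using hx
  have h2 : Tendsto (fun x : ℝ => (-x)⁻¹) (𝓝[<] (0:ℝ)) atTop :=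
    tendsto_inv_nhdsGT_zero.comp h1
  have h3 := tendsto_neg_atTop_atBot.comp h2
  refine h3.congr fun x => ?_
  simp [inv_neg]

private lemma ivt_pole {a b : ℝ} {F : ℝ → ℝ} (hab : a < b)
    (hc : ContinuousOn F (Set.Ioo a b))
    (hA : Tendsto F (𝓝[>] a) atTop) (hB : Tendsto F (𝓝[<] b) atBot) :
    ∃ z ∈ Set.Ioo a b, F z = 0 := by
  have hmemA : Set.Ioo a b ∈ 𝓝[>] a := Ioo_mem_nhdsGT_of_mem ⟨le_refl a, hab⟩
  have hmemB : Set.Ioo a b ∈ 𝓝[<] b := Ioo_mem_nhdsLT_of_mem ⟨hab, le_refl b⟩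
  obtain ⟨z₁, hz₁F, hz₁⟩ := ((hA.eventually_gt_atTop 0).and (eventually_of_mem hmemA fun x hx => hx)).exists
  obtain ⟨z₂, hz₂F, hz₂⟩ := ((hB.eventually_lt_atBot 0).and (eventually_of_mem hmemB fun x hx => hx)).exists
  rcases lt_trichotomy z₁ z₂ with h | h | h
  · have hsub : Set.Icc z₁ z₂ ⊆ Set.Ioo a b := Set.ordConnected_Ioo.out hz₁ hz₂
    have := intermediate_value_Icc' h.le (hc.mono hsub)
    obtain ⟨z, hz, hz0⟩ := this ⟨hz₂F.le, hz₁F.le⟩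
    exact ⟨z, hsub hz, hz0⟩
  · exact absurd (h ▸ hz₁F) (not_lt.2 hz₂F.le)
  · have hsub : Set.Icc z₂ z₁ ⊆ Set.Ioo a b := Set.ordConnected_Ioo.out hz₂ hz₁
    have := intermediate_value_Icc h.le (hc.mono hsub)
    obtain ⟨z, hz, hz0⟩ := this ⟨hz₂F.le, hz₁F.le⟩
    exact ⟨z, hsub hz, hz0⟩

private lemma interlace_aux (N : ℕ) (τ c : ℕ → ℝ) (i : ℕ)
    (hτpos : ∀ k < N, 0 < τ k)
    (hτmono : ∀ j k, j < k → k < N → τ j < τ k)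
    (hi : i + 1 < N)
    (hci : 0 < c i) (hci1 : 0 < c (i + 1)) :
    ∃ z ∈ Set.Ioo (-1 / τ i) (-1 / τ (i + 1)),
      ∑ j ∈ Finset.range N, c j / (τ j * z + 1) = 0 := by
  set a : ℝ := -1 / τ i with ha
  set b : ℝ := -1 / τ (i + 1) with hb
  have hiN : i < N := lt_trans (Nat.lt_succ_self i) hi
  have hτi : 0 < τ i := hτpos i hiN
  have hτi1 : 0 < τ (i + 1) := hτpos (i + 1) hi
  have hτlt : τ i < τ (i + 1) := hτmono i (i + 1) (Nat.lt_succ_self i) hi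
  have hab : a < b := by
    rw [ha, hb, div_lt_div_iff₀ hτi hτi1]
    nlinarith
  -- denominator signs on the open interval
  have hden : ∀ j < N, ∀ z ∈ Set.Ioo a b, τ j * z + 1 ≠ 0 := by
    intro j hjN z hz
    rcases le_or_gt j i with hji | hji
    · have hτj : 0 < τ j := hτpos j hjN
      have hle : τ j ≤ τ i := by
        rcases eq_or_lt_of_le hji with rfl | h
        · exact le_refl _
        · exact (hτmono j i h hiN).le
      have h1 : τ j * a < τ j * z := mul_lt_mul_of_pos_left hz.1 hτj
      have h2 : τ j * a = -(τ j / τ i) := by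
        rw [ha]; field_simp
      have h3 : τ j / τ i ≤ 1 := (div_le_one hτi).mpr hle
      intro h0
      rw [h2] at h1
      nlinarith
    · have hτj : 0 < τ j := hτpos j hjN
      have hle : τ (i + 1) ≤ τ j := by
        rcases eq_or_lt_of_le (Nat.succ_le_of_lt hji) with h | h
        · exact le_of_eq (congrArg τ h)
        · exact (hτmono (i + 1) j h hjN).le
      have h1 : τ j * z < τ j * b := mul_lt_mul_of_pos_left hz.2 hτj
      have h2 : τ j * b = -(τ j / τ (i + 1)) := by
        rw [hb]; field_simp
      have h3 : 1 ≤ τ j / τ (i + 1) := (one_le_div hτi1).mpr hle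
      intro h0
      rw [h2] at h1
      nlinarith
  -- denominators at a for j ≠ i, and at b for j ≠ i+1
  have hdena : ∀ j < N, j ≠ i → τ j * a + 1 ≠ 0 := by
    intro j hjN hjne h0
    have hτj : 0 < τ j := hτpos j hjN
    have : τ j = τ i := by
      rw [ha] at h0; field_simp at h0; linarith
    rcases lt_or_gt_of_ne hjne with h | h
    · exact absurd this (ne_of_lt (hτmono j i h hiN))
    · exact absurd this.symm (ne_of_lt (hτmono i j h hjN))
  have hdenb : ∀ j < N, j ≠ i + 1 → τ j * b + 1 ≠ 0 := by
    intro j hjN hjne h0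
    have hτj : 0 < τ j := hτpos j hjN
    have : τ j = τ (i + 1) := by
      rw [hb] at h0; field_simp at h0; linarith
    rcases lt_or_gt_of_ne hjne with h | h
    · exact absurd this (ne_of_lt (hτmono j (i + 1) h hi))
    · exact absurd this.symm (ne_of_lt (hτmono (i + 1) j h hjN))
  set F : ℝ → ℝ := fun z => ∑ j ∈ Finset.range N, c j / (τ j * z + 1) with hF
  -- continuity on the interval
  have hcont : ContinuousOn F (Set.Ioo a b) := by
    apply continuousOn_finset_sum
    intro j hj
    have hjN := Finset.mem_range.mp hj
    apply ContinuousOn.div continuousOn_const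
    · fun_prop
    · intro z hz; exact hden j hjN z hz
  -- decomposition around pole i
  have hG : ∀ (p : ℕ) (x : ℝ), (∀ j < N, j ≠ p → τ j * x + 1 ≠ 0) →
      Tendsto (fun z => ∑ j ∈ (Finset.range N).erase p, c j / (τ j * z + 1))
        (𝓝 x) (𝓝 (∑ j ∈ (Finset.range N).erase p, c j / (τ j * x + 1))) := by
    intro p x hx
    apply tendsto_finset_sum
    intro j hj
    have hjN := Finset.mem_range.mp (Finset.mem_of_mem_erase hj)
    have hjne := Finset.ne_of_mem_erase hj
    exact (ContinuousAt.div continuousAt_const (by fun_prop) (hx j hjN hjne))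
  have hdecomp : ∀ (p : ℕ), p < N → ∀ z, F z =
      c p * (τ p * z + 1)⁻¹ + ∑ j ∈ (Finset.range N).erase p, c j / (τ j * z + 1) := by
    intro p hp z
    simp only [hF]
    rw [← Finset.add_sum_erase _ _ (Finset.mem_range.mpr hp), div_eq_mul_inv]
  -- tendsto atTop at a from the right
  have hτa : τ i * a + 1 = 0 := by rw [ha]; field_simp; norm_num
  have h0A : Tendsto (fun z => τ i * z + 1) (𝓝[>] a) (𝓝[>] (0:ℝ)) := by
    apply tendsto_nhdsWithin_of_tendsto_nhds_of_eventually_within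
    · have : Tendsto (fun z => τ i * z + 1) (𝓝 a) (𝓝 (τ i * a + 1)) :=
        (((continuous_const.mul continuous_id).add continuous_const).tendsto a)
      rw [hτa] at this
      exact this.mono_left nhdsWithin_le_nhds
    · filter_upwards [self_mem_nhdsWithin] with z hz
      have : a < z := hz
      have := mul_lt_mul_of_pos_left this hτi
      simp only [Set.mem_Ioi]
      linarith [hτa]
  have hA : Tendsto F (𝓝[>] a) atTop := by
    have h1 : Tendsto (fun z => c i * (τ i * z + 1)⁻¹) (𝓝[>] a) atTop :=
      (tendsto_inv_nhdsGT_zero.comp h0A).const_mul_atTop hci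
    have h2 := (hG i a (hdena)).mono_left (nhdsWithin_le_nhds (s := Set.Ioi a))
    have := h1.atTop_add h2
    refine this.congr fun z => (hdecomp i hiN z).symm
  -- tendsto atBot at b from the left
  have hτb : τ (i + 1) * b + 1 = 0 := by rw [hb]; field_simp; norm_num
  have h0B : Tendsto (fun z => τ (i + 1) * z + 1) (𝓝[<] b) (𝓝[<] (0:ℝ)) := by
    apply tendsto_nhdsWithin_of_tendsto_nhds_of_eventually_within
    · have : Tendsto (fun z => τ (i + 1) * z + 1) (𝓝 b) (𝓝 (τ (i + 1) * b + 1)) :=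
        (((continuous_const.mul continuous_id).add continuous_const).tendsto b)
      rw [hτb] at this
      exact this.mono_left nhdsWithin_le_nhds
    · filter_upwards [self_mem_nhdsWithin] with z hz
      have : z < b := hz
      have := mul_lt_mul_of_pos_left this hτi1
      simp only [Set.mem_Iio]
      linarith [hτb]
  have hB : Tendsto F (𝓝[<] b) atBot := by
    have h1 : Tendsto (fun z => c (i + 1) * (τ (i + 1) * z + 1)⁻¹) (𝓝[<] b) atBot :=
      (inv_zero_atBot'.comp h0B).const_mul_atBot hci1
    have h2 := (hG (i + 1) b (hdenb)).mono_left (nhdsWithin_le_nhds (s := Set.Iio b))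
    have := h1.atBot_add h2
    refine this.congr fun z => (hdecomp (i + 1) hi z).symm
  exact ivt_pole hab hcont hA hB

theorem stmt6 (m n : ℕ) (τ ρ : ℕ → ℝ) (β : ℝ)
    (hτpos : ∀ i < m + n, 0 < τ i)
    (hτmono : ∀ i j, i < j → j < m + n → τ i < τ j)
    (hρ : ∀ i < m + n, 0 < ρ i)
    (hρp : ∑ i ∈ Finset.range m, ρ i = 1)
    (hρn : ∑ i ∈ Finset.Ico m (m + n), ρ i = 1)
    (hβ : β ∈ Set.Ioo (0:ℝ) 1) :
    ∀ i, i + 1 < m + n → i + 1 ≠ m →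
      ∃ z ∈ Set.Ioo (-1 / τ i) (-1 / τ (i + 1)),
        β * ∑ j ∈ Finset.range m, ρ j / (τ j * z + 1)
          - (1 - β) * ∑ j ∈ Finset.Ico m (m + n), ρ j / (τ j * z + 1) = 0 := by
  intro i hi him
  obtain ⟨hβ0, hβ1⟩ := hβ
  set c : ℕ → ℝ := fun j => if j < m then β * ρ j else -((1 - β) * ρ j) with hc
  have hsplit : ∀ z : ℝ,
      ∑ j ∈ Finset.range (m + n), c j / (τ j * z + 1)
        = β * ∑ j ∈ Finset.range m, ρ j / (τ j * z + 1)
          - (1 - β) * ∑ j ∈ Finset.Ico m (m + n), ρ j / (τ j * z + 1) := by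
    intro z
    have hr : Finset.range (m + n) = Finset.range m ∪ Finset.Ico m (m + n) := by
      rw [Finset.range_eq_Ico, Finset.range_eq_Ico]
      exact (Finset.Ico_union_Ico_eq_Ico (Nat.zero_le m) (Nat.le_add_right m n)).symm
    rw [hr, Finset.sum_union (by
      rw [Finset.range_eq_Ico]
      exact Finset.Ico_disjoint_Ico_consecutive 0 m (m + n))]
    have h1 : ∑ j ∈ Finset.range m, c j / (τ j * z + 1)
        = β * ∑ j ∈ Finset.range m, ρ j / (τ j * z + 1) := by
      rw [Finset.mul_sum]
      apply Finset.sum_congr rfl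
      intro j hj
      rw [hc]
      simp only [Finset.mem_range.mp hj, if_true]
      ring
    have h2 : ∑ j ∈ Finset.Ico m (m + n), c j / (τ j * z + 1)
        = -((1 - β) * ∑ j ∈ Finset.Ico m (m + n), ρ j / (τ j * z + 1)) := by
      rw [Finset.mul_sum, ← Finset.sum_neg_distrib]
      apply Finset.sum_congr rfl
      intro j hj
      have := (Finset.mem_Ico.mp hj).1
      rw [hc]
      simp only [Nat.not_lt.mpr this, if_false]
      ring
    rw [h1, h2]
    ring
  rcases Nat.lt_or_ge (i + 1) m with hlt | hge
  · have hci : 0 < c i := by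
      rw [hc]; simp only [Nat.lt_of_succ_lt hlt, if_true]
      exact mul_pos hβ0 (hρ i (lt_trans (Nat.lt_succ_self i) hi))
    have hci1 : 0 < c (i + 1) := by
      rw [hc]; simp only [hlt, if_true]
      exact mul_pos hβ0 (hρ (i + 1) hi)
    obtain ⟨z, hz, hz0⟩ := interlace_aux (m + n) τ c i hτpos hτmono hi hci hci1
    exact ⟨z, hz, by rw [← hsplit z]; exact hz0⟩
  · have hge' : m ≤ i := by
      rcases Nat.lt_or_ge i m with h | h
      · exact absurd (Nat.le_antisymm hge (Nat.succ_le_of_lt h)) him.symm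
      · exact h
    have hci : 0 < -c i := by
      rw [hc]; simp only [Nat.not_lt.mpr hge', if_false, neg_neg]
      exact mul_pos (by linarith) (hρ i (lt_trans (Nat.lt_succ_self i) hi))
    have hci1 : 0 < -c (i + 1) := by
      rw [hc]; simp only [Nat.not_lt.mpr (Nat.le_succ_of_le hge'), if_false, neg_neg]
      exact mul_pos (by linarith) (hρ (i + 1) hi)
    obtain ⟨z, hz, hz0⟩ := interlace_aux (m + n) τ (fun j => -c j) i hτpos hτmono hi hci hci1
    refine ⟨z, hz, ?_⟩
    rw [← hsplit z]
    have : ∑ j ∈ Finset.range (m + n), -c j / (τ j * z + 1)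
        = -∑ j ∈ Finset.range (m + n), c j / (τ j * z + 1) := by
      rw [← Finset.sum_neg_distrib]
      apply Finset.sum_congr rfl
      intro j _
      ring
    rw [this] at hz0
    linarith
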